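/- Let φ be a permutation of a set X, let S = X/φ be its set of orbits and S_fin ⊆ S the finite orbits. Then the homology of the mapping torus of φ satisfies H_0 ≅ ℤS, H_1 ≅ ℤS_fin, and H_n = 0 for n ≥ 2. -/

import Mathlib

open CategoryTheory

/-- The orbit equivalence relation of a permutation. -/
def orbSetoid {X : Type} (φ : X ≃ X) : Setoid X where
  r x y := ∃ k : ℤ, (φ ^ k) x = y
  iseqv := by
    constructor
    · exact fun x => ⟨0, rfl⟩
    · rintro x y ⟨k, rfl⟩
      exact ⟨-k, by simp [← Equiv.Perm.mul_apply, ← zpow_add]⟩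
    · rintro x y z ⟨k, rfl⟩ ⟨l, rfl⟩
      exact ⟨l + k, by simp [← Equiv.Perm.mul_apply, ← zpow_add]⟩

/-- The modules of the cellular chain complex of the mapping torus `X ⫽ φ` of a
permutation `φ` of a discrete set `X`: one `0`-cell and one `1`-cell for each point. -/
noncomputable def torusModule (X : Type) : ℕ → ModuleCat ℤ
  | 0 => ModuleCat.of ℤ (X →₀ ℤ)
  | 1 => ModuleCat.of ℤ (X →₀ ℤ)
  | (_+2) => ModuleCat.of ℤ PUnit

/-- The differentials: `1 − φ_*` in degree one, zero above. -/
noncomputable def torusDiff {X : Type} (φ : X ≃ X) :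
    (n : ℕ) → (torusModule X (n+1) ⟶ torusModule X n)
  | 0 => ModuleCat.ofHom (LinearMap.id - Finsupp.lmapDomain ℤ ℤ ⇑φ : (X →₀ ℤ) →ₗ[ℤ] (X →₀ ℤ))
  | (_+1) => 0

/-- The cellular chain complex of the mapping torus of `φ : X → X`, `X` discrete:
`⋯ → 0 → ℤX --(1−φ_*)--> ℤX`. -/
noncomputable def mappingTorusComplex (X : Type) (φ : X ≃ X) : ChainComplex (ModuleCat ℤ) ℕ :=
  ChainComplex.of (torusModule X) (torusDiff φ) (fun n => by
    show (0 : torusModule X (n+2) ⟶ torusModule X (n+1)) ≫ _ = 0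
    simp)

namespace MappingTorusAux

open scoped Classical

/-! ### Generalities: homology of short complexes of modules with one zero map -/

/-- Homology of a short complex with `g = 0` is the cokernel of `f`. -/
noncomputable def homologyIsoOfGZero {R : Type} [Ring R] (S : ShortComplex (ModuleCat R))
    (hg : S.g = 0) :
    S.homology ≅ ModuleCat.of R (S.X₂ ⧸ LinearMap.range S.f.hom) := by
  refine S.moduleCatHomologyIso ≪≫ LinearEquiv.toModuleIso ?_
  have hker : LinearMap.ker S.g.hom = (⊤ : Submodule R S.X₂) := LinearMap.ker_eq_top.2 (by rw [hg]; rfl)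
  refine Submodule.Quotient.equiv _ _
    ((LinearEquiv.ofEq _ _ hker).trans (Submodule.topEquiv)) ?_
  apply le_antisymm
  · rintro _ ⟨_, ⟨x, rfl⟩, rfl⟩
    exact ⟨x, rfl⟩
  · rintro _ ⟨x, rfl⟩
    exact ⟨S.moduleCatToCycles x, ⟨x, rfl⟩, rfl⟩

/-- Homology of a short complex with `f = 0` is the kernel of `g`. -/
noncomputable def homologyIsoOfFZero {R : Type} [Ring R] (S : ShortComplex (ModuleCat R))
    (hf : S.f = 0) :
    S.homology ≅ ModuleCat.of R (LinearMap.ker S.g.hom) := by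
  refine S.moduleCatHomologyIso ≪≫ LinearEquiv.toModuleIso ?_
  refine Submodule.quotEquivOfEqBot _ ?_
  rw [LinearMap.range_eq_bot]
  apply LinearMap.ext
  intro x
  apply Subtype.ext
  simp [hf]
  exact Subtype.ext (show S.f.hom x = 0 by rw [hf]; simp)

/-! ### The concrete differential -/

variable {X : Type} (φ : X ≃ X)

/-- The degree-one differential as a plain linear map. -/
noncomputable def dd : (X →₀ ℤ) →ₗ[ℤ] (X →₀ ℤ) :=
  LinearMap.id - Finsupp.lmapDomain ℤ ℤ ⇑φ

lemma dd_apply (f : X →₀ ℤ) : dd φ f = f - Finsupp.mapDomain φ f := rfl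

/-- Orbit quotient. -/
abbrev qmk (x : X) : _root_.Quotient (orbSetoid φ) := _root_.Quotient.mk (orbSetoid φ) x

lemma mk_phi (x : X) : qmk φ (φ x) = qmk φ x :=
  Quotient.sound ⟨-1, by simp⟩

lemma mk_phi_inv (y : X) : qmk φ (φ⁻¹ y) = qmk φ y :=
  Quotient.sound ⟨1, by simp⟩

lemma phi_zpow_succ (k : ℤ) (y : X) : (φ ^ (k + 1)) y = φ ((φ ^ k) y) := by
  rw [show k + 1 = 1 + k by ring, zpow_one_add, Equiv.Perm.mul_apply]

lemma phi_zpow_pred (k : ℤ) (y : X) : φ ((φ ^ (k - 1)) y) = (φ ^ k) y := by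
  rw [← Equiv.Perm.mul_apply, ← zpow_one_add, show (1 : ℤ) + (k - 1) = k by ring]

lemma mapDomain_apply' (f : X →₀ ℤ) (y : X) :
    Finsupp.mapDomain φ f y = f (φ⁻¹ y) := by
  have := Finsupp.mapDomain_apply φ.injective f (φ⁻¹ y)
  simpa using this

lemma mem_ker_iff (f : X →₀ ℤ) :
    f ∈ LinearMap.ker (dd φ) ↔ ∀ y, f (φ⁻¹ y) = f y := by
  rw [LinearMap.mem_ker, dd_apply, sub_eq_zero]
  constructor
  · intro h y
    conv_rhs => rw [h]
    rw [mapDomain_apply']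
  · intro h
    ext y
    rw [mapDomain_apply', h]

/-! ### Degree-zero homology -/

lemma single_phi_mem (y : X) :
    Finsupp.single (φ y) 1 - Finsupp.single y 1 ∈ LinearMap.range (dd φ) := by
  refine ⟨-(Finsupp.single y 1), ?_⟩
  rw [map_neg, dd_apply, Finsupp.mapDomain_single]
  abel

lemma zpow_single_mem (k : ℤ) (y : X) :
    Finsupp.single ((φ ^ k) y) 1 - Finsupp.single y 1 ∈ LinearMap.range (dd φ) := by
  induction k using Int.induction_on with
  | zero => simp
  | succ i ih =>
      have e : (Finsupp.single ((φ ^ ((i : ℤ) + 1)) y) 1 - Finsupp.single y 1 : X →₀ ℤ) =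
          (Finsupp.single (φ ((φ ^ (i : ℤ)) y)) 1 - Finsupp.single ((φ ^ (i : ℤ)) y) 1) +
          (Finsupp.single ((φ ^ (i : ℤ)) y) 1 - Finsupp.single y 1) := by
        rw [phi_zpow_succ]; abel
      rw [e]
      exact add_mem (single_phi_mem φ _) ih
  | pred i ih =>
      have hz : φ ((φ ^ (-(i : ℤ) - 1)) y) = (φ ^ (-(i : ℤ))) y := phi_zpow_pred φ _ y
      have e : (Finsupp.single ((φ ^ (-(i : ℤ) - 1)) y) 1 - Finsupp.single y 1 : X →₀ ℤ) =
          (-(Finsupp.single (φ ((φ ^ (-(i : ℤ) - 1)) y)) 1 -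
              Finsupp.single ((φ ^ (-(i : ℤ) - 1)) y) 1)) +
          (Finsupp.single ((φ ^ (-(i : ℤ))) y) 1 - Finsupp.single y 1) := by
        rw [hz]; abel
      rw [e]
      exact add_mem (neg_mem (single_phi_mem φ _)) ih

/-- The projection `ℤX → ℤ[X/φ]`. -/
noncomputable def pr : (X →₀ ℤ) →ₗ[ℤ] (_root_.Quotient (orbSetoid φ) →₀ ℤ) :=
  Finsupp.lmapDomain ℤ ℤ (_root_.Quotient.mk (orbSetoid φ))

lemma pr_apply (f : X →₀ ℤ) :
    pr φ f = Finsupp.mapDomain (_root_.Quotient.mk (orbSetoid φ)) f := rfl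

lemma pr_surj : Function.Surjective (pr φ) := by
  intro g
  refine ⟨Finsupp.mapDomain Quotient.out g, ?_⟩
  rw [pr_apply, ← Finsupp.mapDomain_comp]
  have : (_root_.Quotient.mk (orbSetoid φ)) ∘ (Quotient.out) = id :=
    funext fun s => Quotient.out_eq s
  rw [this, Finsupp.mapDomain_id]

lemma sub_out_mem (f : X →₀ ℤ) :
    f - Finsupp.mapDomain Quotient.out (pr φ f) ∈ LinearMap.range (dd φ) := by
  induction f using Finsupp.induction_linear with
  | zero => simp
  | add f g hf hg =>
      have h := add_mem hf hg
      have e : (f + g) - Finsupp.mapDomain Quotient.out (pr φ (f + g)) =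
          (f - Finsupp.mapDomain Quotient.out (pr φ f)) +
          (g - Finsupp.mapDomain Quotient.out (pr φ g)) := by
        rw [map_add, Finsupp.mapDomain_add]
        abel
      rw [e]
      exact h
  | single a b =>
      have e : Finsupp.single a b - Finsupp.mapDomain Quotient.out (pr φ (Finsupp.single a b)) =
          b • (Finsupp.single a 1 - Finsupp.single (Quotient.out (qmk φ a)) 1) := by
        rw [pr_apply, Finsupp.mapDomain_single, Finsupp.mapDomain_single, smul_sub]
        simp [Finsupp.smul_single]
      rw [e]
      refine Submodule.smul_mem _ _ ?_
      obtain ⟨k, hk⟩ := Quotient.exact ((qmk φ a).out_eq : qmk φ (Quotient.out (qmk φ a)) = qmk φ a)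
      have := zpow_single_mem φ k (Quotient.out (qmk φ a))
      rw [hk] at this
      exact this

lemma ker_pr_eq : LinearMap.ker (pr φ) = LinearMap.range (dd φ) := by
  apply le_antisymm
  · intro f hf
    rw [LinearMap.mem_ker] at hf
    have h := sub_out_mem φ f
    rwa [hf, Finsupp.mapDomain_zero, sub_zero] at h
  · rintro _ ⟨f, rfl⟩
    rw [LinearMap.mem_ker, dd_apply, map_sub]
    have : pr φ (Finsupp.mapDomain φ f) = pr φ f := by
      rw [pr_apply, pr_apply, ← Finsupp.mapDomain_comp]
      congr 1
      funext x
      exact mk_phi φ x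
    rw [this, sub_self]

/-- The degree-zero homology equivalence. -/
noncomputable def h0equiv :
    ((X →₀ ℤ) ⧸ LinearMap.range (dd φ)) ≃ₗ[ℤ] (_root_.Quotient (orbSetoid φ) →₀ ℤ) :=
  (Submodule.quotEquivOfEq _ _ (ker_pr_eq φ).symm).trans
    ((pr φ).quotKerEquivOfSurjective (pr_surj φ))

/-! ### Degree-one homology -/

/-- The finite orbits. -/
abbrev SFin := {s : _root_.Quotient (orbSetoid φ) //
  {x : X | _root_.Quotient.mk (orbSetoid φ) x = s}.Finite}

lemma ker_apply_zpow {f : X →₀ ℤ} (hf : f ∈ LinearMap.ker (dd φ)) (k : ℤ) (x : X) :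
    f ((φ ^ k) x) = f x := by
  have hinv : ∀ y, f (φ⁻¹ y) = f y := (mem_ker_iff φ f).1 hf
  have hfor : ∀ y, f (φ y) = f y := by
    intro y
    have := hinv (φ y)
    simpa using this.symm
  induction k using Int.induction_on with
  | zero => simp
  | succ i ih =>
      rw [phi_zpow_succ, hfor, ih]
  | pred i ih =>
      calc f ((φ ^ (-(i : ℤ) - 1)) x) = f (φ ((φ ^ (-(i : ℤ) - 1)) x)) := (hfor _).symm
        _ = f ((φ ^ (-(i : ℤ))) x) := by rw [phi_zpow_pred]
        _ = f x := ih

lemma ker_const {f : X →₀ ℤ} (hf : f ∈ LinearMap.ker (dd φ)) {x y : X}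
    (h : qmk φ x = qmk φ y) : f x = f y := by
  obtain ⟨k, hk⟩ := Quotient.exact h
  rw [← hk, ker_apply_zpow φ hf]

lemma ker_zero_of_infinite {f : X →₀ ℤ} (hf : f ∈ LinearMap.ker (dd φ)) {x : X}
    (h : ¬ {y : X | _root_.Quotient.mk (orbSetoid φ) y = qmk φ x}.Finite) : f x = 0 := by
  by_contra h0
  apply h
  apply Set.Finite.subset f.finite_support
  intro y hy
  have : f y = f x := ker_const φ hf hy
  simp only [Set.mem_setOf_eq, Function.mem_support]
  rw [this]
  exact h0

/-- The indicator of a finite orbit. -/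
noncomputable def ind (s : SFin φ) : X →₀ ℤ :=
  ∑ x ∈ s.2.toFinset, Finsupp.single x 1

lemma ind_apply (s : SFin φ) (y : X) :
    ind φ s y = if qmk φ y = s.1 then 1 else 0 := by
  classical
  rw [ind, Finsupp.finset_sum_apply]
  simp only [Finsupp.single_apply]
  rw [Finset.sum_ite_eq']
  simp [Set.Finite.mem_toFinset]

lemma ind_mem_ker (s : SFin φ) : ind φ s ∈ LinearMap.ker (dd φ) := by
  rw [mem_ker_iff]
  intro y
  rw [ind_apply, ind_apply, mk_phi_inv]

/-- From `ℤ[S_fin]` to chains: linear combinations of orbit indicators. -/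
noncomputable def indMap : (SFin φ →₀ ℤ) →ₗ[ℤ] (X →₀ ℤ) :=
  Finsupp.linearCombination ℤ (ind φ)

lemma indMap_apply (g : SFin φ →₀ ℤ) (y : X) :
    indMap φ g y =
      if h : ({x : X | _root_.Quotient.mk (orbSetoid φ) x = qmk φ y}).Finite then
        g ⟨qmk φ y, h⟩ else 0 := by
  classical
  rw [indMap, Finsupp.linearCombination_apply, Finsupp.sum, Finsupp.finset_sum_apply]
  simp only [Finsupp.smul_apply, ind_apply, smul_eq_mul, mul_ite, mul_one, mul_zero]
  split_ifs with h
  · rw [Finset.sum_eq_single (⟨qmk φ y, h⟩ : SFin φ)]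
    · simp
    · intro b _ hb
      rw [if_neg]
      intro hc
      exact hb (Subtype.ext hc.symm)
    · intro ha
      simp [Finsupp.notMem_support_iff.mp ha]
  · apply Finset.sum_eq_zero
    intro s _
    rw [if_neg]
    intro hc
    apply h
    rw [hc]
    exact s.2

lemma indMap_mem_ker (g : SFin φ →₀ ℤ) : indMap φ g ∈ LinearMap.ker (dd φ) := by
  induction g using Finsupp.induction_linear with
  | zero => simp
  | add f g hf hg => rw [map_add]; exact add_mem hf hg
  | single a b =>
      rw [indMap, Finsupp.linearCombination_single]
      exact Submodule.smul_mem _ _ (ind_mem_ker φ a)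

lemma out_injective : Function.Injective
    (fun s : SFin φ => Quotient.out s.1) := by
  intro s t h
  apply Subtype.ext
  rw [← Quotient.out_eq s.1, ← Quotient.out_eq t.1]
  simp only at h
  rw [h]

/-- From chains to `ℤ[S_fin]`: evaluate at orbit representatives. -/
noncomputable def proj : (X →₀ ℤ) →ₗ[ℤ] (SFin φ →₀ ℤ) :=
  Finsupp.lcomapDomain _ (out_injective φ)

lemma proj_apply (f : X →₀ ℤ) (s : SFin φ) :
    proj φ f s = f (Quotient.out s.1) := rfl

/-- The degree-one homology equivalence. -/
noncomputable def kerEquiv : LinearMap.ker (dd φ) ≃ₗ[ℤ] (SFin φ →₀ ℤ) := by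
  refine LinearEquiv.ofLinear (proj φ ∘ₗ (LinearMap.ker (dd φ)).subtype)
    (LinearMap.codRestrict _ (indMap φ) (indMap_mem_ker φ)) ?_ ?_
  · apply LinearMap.ext
    intro g
    apply Finsupp.ext
    intro s
    show proj φ (indMap φ g) s = g s
    rw [proj_apply, indMap_apply]
    have hC : ({x : X | _root_.Quotient.mk (orbSetoid φ) x = qmk φ (Quotient.out s.1)}).Finite := by
      rw [show qmk φ (Quotient.out s.1) = s.1 from Quotient.out_eq s.1]
      exact s.2
    rw [dif_pos hC]
    congr 1
    exact Subtype.ext (Quotient.out_eq s.1)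
  · apply LinearMap.ext
    intro f
    apply Subtype.ext
    apply Finsupp.ext
    intro y
    show indMap φ (proj φ (f : X →₀ ℤ)) y = (f : X →₀ ℤ) y
    rw [indMap_apply]
    split_ifs with h
    · rw [proj_apply]
      refine ker_const φ f.2 ?_
      exact Quotient.out_eq _
    · exact (ker_zero_of_infinite φ f.2 h).symm

end MappingTorusAux

open MappingTorusAux

/-- The homology of the mapping torus of a permutation `φ` of a set `X`:
`H₀ ≅ ℤS` for `S = X/φ` the set of orbits, `H₁ ≅ ℤS_fin` for `S_fin` the set of finite
orbits, and `H_n = 0` for `n ≥ 2`. -/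
theorem mapping_torus_homology (X : Type) (φ : X ≃ X) :
    Nonempty ((mappingTorusComplex X φ).homology 0 ≅
        ModuleCat.of ℤ (_root_.Quotient (orbSetoid φ) →₀ ℤ)) ∧
    Nonempty ((mappingTorusComplex X φ).homology 1 ≅
        ModuleCat.of ℤ ({s : _root_.Quotient (orbSetoid φ) //
          {x : X | _root_.Quotient.mk (orbSetoid φ) x = s}.Finite} →₀ ℤ)) ∧
    ∀ n : ℕ, 2 ≤ n → Limits.IsZero ((mappingTorusComplex X φ).homology n) := by
  set K := mappingTorusComplex X φ with hK
  have hd10 : K.d 1 0 = torusDiff φ 0 := ChainComplex.of_d (torusModule X) (torusDiff φ) 0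
  have hd21 : K.d 2 1 = torusDiff φ 1 := ChainComplex.of_d (torusModule X) (torusDiff φ) 1
  refine ⟨?_, ?_, ?_⟩
  · -- degree 0
    have hrange : @Eq (Submodule ℤ (X →₀ ℤ)) (LinearMap.range ((K.d 1 0).hom : (X →₀ ℤ) →ₗ[ℤ] (X →₀ ℤ)))
        (LinearMap.range (dd φ)) := by
      rw [hd10]; rfl
    exact ⟨(ShortComplex.homologyMapIso
        (K.isoSc' 1 0 0 (by simp) (by simp [ChainComplex.next_nat_zero]))) ≪≫
      homologyIsoOfGZero _ (K.shape 0 0 (by simp)) ≪≫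
      LinearEquiv.toModuleIso
        ((Submodule.quotEquivOfEq _ _ hrange).trans (h0equiv φ))⟩
  · -- degree 1
    have hker : @Eq (Submodule ℤ (X →₀ ℤ)) (LinearMap.ker ((K.d 1 0).hom : (X →₀ ℤ) →ₗ[ℤ] (X →₀ ℤ)))
        (LinearMap.ker (dd φ)) := by
      rw [hd10]; rfl
    exact ⟨(ShortComplex.homologyMapIso
        (K.isoSc' 2 1 0 (by simp) (by simp))) ≪≫
      homologyIsoOfFZero _ (by exact hd21) ≪≫
      LinearEquiv.toModuleIso
        ((LinearEquiv.ofEq _ _ hker).trans (kerEquiv φ))⟩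
  · -- degrees ≥ 2
    intro n hn
    obtain ⟨m, rfl⟩ : ∃ m, n = m + 2 := ⟨n - 2, by omega⟩
    rw [← HomologicalComplex.exactAt_iff_isZero_homology]
    exact ShortComplex.exact_of_isZero_X₂ _
      (ModuleCat.isZero_of_subsingleton (ModuleCat.of ℤ PUnit))
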